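/- Let Ω be Hermitian with 0 ≤ Ω ≤ I on H^{⊗k} and λ₂(Ω) < 1 its second largest eigenvalue, where Ω|Ψ⟩ = |Ψ⟩ for |Ψ⟩ = |ψ⟩^{⊗k}. If σ⁽¹⁾,...,σ⁽ᵏ⁾ are density operators each with ⟨ψ|σ⁽ʳ⁾|ψ⟩ ≤ 1−ε, then the product state ξ = σ⁽¹⁾⊗···⊗σ⁽ᵏ⁾ satisfies ⟨Ψ|ξ|Ψ⟩ ≤ (1−ε)^k, and consequently tr[Ωξ] ≤ 1 − (1−λ₂(Ω))(1−(1−ε)^k). -/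

import Mathlib

open Matrix
open scoped ComplexOrder

lemma aux_sum_prod {k m : ℕ} (G : Fin k → Fin m → ℂ) :
    ∑ f : Fin k → Fin m, ∏ r, G r (f r) = ∏ r, ∑ a, G r a :=
  (Fintype.prod_sum G).symm

lemma aux_dot_prod {k m : ℕ} (x y : Fin m → ℂ) :
    star (fun f : Fin k → Fin m => ∏ r, x (f r)) ⬝ᵥ (fun f => ∏ r, y (f r))
      = ∏ _r : Fin k, star x ⬝ᵥ y := by
  simp only [dotProduct, Pi.star_apply, star_prod]
  rw [← aux_sum_prod fun r a => star (x a) * y a]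
  exact Finset.sum_congr rfl fun f _ => by rw [Finset.prod_mul_distrib]

lemma aux_quad_prod {k m : ℕ} (A : Fin k → Matrix (Fin m) (Fin m) ℂ) (x y : Fin m → ℂ) :
    star (fun f : Fin k → Fin m => ∏ r, x (f r)) ⬝ᵥ
      ((Matrix.of fun f g : Fin k → Fin m => ∏ r, A r (f r) (g r)) *ᵥ fun f => ∏ r, y (f r))
      = ∏ r, star x ⬝ᵥ A r *ᵥ y := by
  have h1 : ((Matrix.of fun f g : Fin k → Fin m => ∏ r, A r (f r) (g r)) *ᵥ
      fun f => ∏ r, y (f r)) = fun f => ∏ r, ∑ b, A r (f r) b * y b := by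
    funext f
    simp only [mulVec, dotProduct, Matrix.of_apply]
    rw [← aux_sum_prod fun r b => A r (f r) b * y b]
    exact Finset.sum_congr rfl fun g _ => by rw [Finset.prod_mul_distrib]
  rw [h1]
  simp only [dotProduct, Pi.star_apply, star_prod, mulVec]
  rw [← aux_sum_prod fun r a => star (x a) * ∑ b, A r a b * y b]
  exact Finset.sum_congr rfl fun f _ => by rw [Finset.prod_mul_distrib]

lemma aux_trace_prod {k m : ℕ} (A : Fin k → Matrix (Fin m) (Fin m) ℂ) :
    (Matrix.of fun f g : Fin k → Fin m => ∏ r, A r (f r) (g r)).trace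
      = ∏ r, (A r).trace := by
  simp only [Matrix.trace, Matrix.diag, Matrix.of_apply]
  exact aux_sum_prod fun r a => A r a a

lemma aux_kron_fact {k m : ℕ} (A : Fin k → Matrix (Fin m) (Fin m) ℂ) :
    (Matrix.of fun f g : Fin k → Fin m => ∏ r, ((A r)ᴴ * A r) (f r) (g r))
      = (Matrix.of fun h f : Fin k → Fin m => ∏ r, A r (h r) (f r))ᴴ *
        (Matrix.of fun h f : Fin k → Fin m => ∏ r, A r (h r) (f r)) := by
  ext f g
  simp only [mul_apply, conjTranspose_apply, Matrix.of_apply, star_prod]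
  rw [show (∑ h : Fin k → Fin m, (∏ r, star (A r (h r) (f r))) * ∏ r, A r (h r) (g r))
      = ∑ h : Fin k → Fin m, ∏ r, (star (A r (h r) (f r)) * A r (h r) (g r)) from
    Finset.sum_congr rfl fun h _ => (Finset.prod_mul_distrib).symm]
  rw [aux_sum_prod fun r c => star (A r c (f r)) * A r c (g r)]

lemma aux_trace_nonneg {n : Type*} [Fintype n] [DecidableEq n] {M : Matrix n n ℂ}
    (h : M.PosSemidef) : 0 ≤ M.trace :=
  Finset.sum_nonneg fun i _ => by simpa [dotProduct, Pi.single_apply] using h.dotProduct_mulVec_nonneg (Pi.single i 1)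

lemma aux_trace_mul_nonneg {n : Type*} [Fintype n] [DecidableEq n]
    {M B : Matrix n n ℂ} (hM : M.PosSemidef) : 0 ≤ (M * (Bᴴ * B)).trace := by
  rw [← mul_assoc, trace_mul_cycle]
  exact aux_trace_nonneg (hM.mul_mul_conjTranspose_same B)

lemma aux_real_of_nonneg {z : ℂ} (hz : 0 ≤ z) : z = (z.re : ℂ) :=
  Complex.ext (by simp) (by simpa using ((Complex.le_def.mp hz).2).symm)

theorem product_fake_state_bounds {m k : ℕ} (hk : 1 ≤ k)
    (ψ : Fin m → ℂ) (hψ : star ψ ⬝ᵥ ψ = 1)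
    (ε : ℝ) (hε0 : 0 ≤ ε) (hε1 : ε ≤ 1)
    (σ : Fin k → Matrix (Fin m) (Fin m) ℂ)
    (hσ : ∀ r, (σ r).PosSemidef ∧ (σ r).trace = 1 ∧
      (star ψ ⬝ᵥ (σ r) *ᵥ ψ).re ≤ 1 - ε)
    (Ψ : (Fin k → Fin m) → ℂ) (hΨ : Ψ = fun f => ∏ r, ψ (f r))
    (Ω : Matrix (Fin k → Fin m) (Fin k → Fin m) ℂ)
    (hherm : Ω.IsHermitian) (hpos : Ω.PosSemidef) (hle : (1 - Ω).PosSemidef)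
    (hfix : Ω *ᵥ Ψ = Ψ)
    (l : ℝ)
    (hl : IsGreatest {x : ℝ | ∃ v : (Fin k → Fin m) → ℂ,
        star v ⬝ᵥ v = 1 ∧ star Ψ ⬝ᵥ v = 0 ∧ x = (star v ⬝ᵥ Ω *ᵥ v).re} l)
    (hl1 : l < 1)
    (ξ : Matrix (Fin k → Fin m) (Fin k → Fin m) ℂ)
    (hξ : ξ = Matrix.of fun f g => ∏ r, σ r (f r) (g r)) :
    (star Ψ ⬝ᵥ ξ *ᵥ Ψ).re ≤ (1 - ε) ^ k ∧
    (Matrix.trace (Ω * ξ)).re ≤ 1 - (1 - l) * (1 - (1 - ε) ^ k) := by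
  classical
  -- Part 1
  have hquad : star Ψ ⬝ᵥ ξ *ᵥ Ψ = ∏ r, star ψ ⬝ᵥ (σ r) *ᵥ ψ := by
    rw [hΨ, hξ]; exact aux_quad_prod σ ψ ψ
  have hzr : ∀ r, 0 ≤ star ψ ⬝ᵥ (σ r) *ᵥ ψ := fun r => (hσ r).1.dotProduct_mulVec_nonneg ψ
  have hre_eq : star Ψ ⬝ᵥ ξ *ᵥ Ψ = ((∏ r, (star ψ ⬝ᵥ (σ r) *ᵥ ψ).re : ℝ) : ℂ) := by
    rw [hquad, Complex.ofReal_prod]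
    exact Finset.prod_congr rfl fun r _ => aux_real_of_nonneg (hzr r)
  have hp1 : (star Ψ ⬝ᵥ ξ *ᵥ Ψ).re ≤ (1 - ε) ^ k := by
    rw [hre_eq, Complex.ofReal_re]
    calc ∏ r, (star ψ ⬝ᵥ (σ r) *ᵥ ψ).re ≤ ∏ _r : Fin k, (1 - ε) :=
          Finset.prod_le_prod (fun r _ => (Complex.le_def.mp (hzr r)).1)
            (fun r _ => (hσ r).2.2)
      _ = (1 - ε) ^ k := by simp
  refine ⟨hp1, ?_⟩
  -- basic facts
  have hΨ1 : star Ψ ⬝ᵥ Ψ = 1 := by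
    rw [hΨ, aux_dot_prod ψ ψ]; simp [hψ]
  have htr : ξ.trace = 1 := by
    rw [hξ, aux_trace_prod σ]
    exact Finset.prod_eq_one fun r _ => (hσ r).2.1
  have hfactor : ∀ r, ∃ B, σ r = Bᴴ * B :=
    fun r => by
      open scoped MatrixOrder in
      obtain ⟨B, hB⟩ := CStarAlgebra.nonneg_iff_eq_star_mul_self.mp (hσ r).1.nonneg
      exact ⟨B, hB⟩
  choose A hA using hfactor
  have hξB : ξ = (Matrix.of fun h f : Fin k → Fin m => ∏ r, A r (h r) (f r))ᴴ *
      (Matrix.of fun h f : Fin k → Fin m => ∏ r, A r (h r) (f r)) := by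
    rw [hξ, ← aux_kron_fact A]
    ext f g
    simp only [Matrix.of_apply]
    exact Finset.prod_congr rfl fun r _ => by rw [← hA r]
  -- the bound on the orthogonal complement
  have hub : ∀ w : (Fin k → Fin m) → ℂ, star Ψ ⬝ᵥ w = 0 →
      (star w ⬝ᵥ Ω *ᵥ w).re ≤ l * (star w ⬝ᵥ w).re := by
    intro w hw
    by_cases hw0 : w = 0
    · subst hw0; simp
    · have hw2 : 0 ≤ star w ⬝ᵥ w := by
        simp only [dotProduct, Pi.star_apply]
        exact Finset.sum_nonneg fun i _ => star_mul_self_nonneg (w i)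
      set N : ℝ := (star w ⬝ᵥ w).re with hNdef
      have hwN : star w ⬝ᵥ w = (N : ℂ) := aux_real_of_nonneg hw2
      have hNne : star w ⬝ᵥ w ≠ 0 := fun h => hw0 (dotProduct_star_self_eq_zero.mp h)
      have hNpos : 0 < N := by
        rcases lt_or_eq_of_le (by simpa using (Complex.le_def.mp hw2).1 : (0:ℝ) ≤ N) with h | h
        · exact h
        · exact absurd (by rw [hwN, ← h]; simp) hNne
      set s : ℝ := Real.sqrt N with hsdef
      have hs : 0 < s := Real.sqrt_pos.mpr hNpos
      have hss : s * s = N := Real.mul_self_sqrt hNpos.le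
      set v : (Fin k → Fin m) → ℂ := ((s⁻¹ : ℝ) : ℂ) • w with hv
      have hstar : star (((s⁻¹:ℝ):ℂ)) = ((s⁻¹:ℝ):ℂ) := by
        simp [Complex.star_def, Complex.conj_ofReal]
      have hv1 : star v ⬝ᵥ v = 1 := by
        rw [hv, star_smul, smul_dotProduct, dotProduct_smul, hwN, hstar, smul_eq_mul,
          smul_eq_mul]
        have hsC : (s:ℂ) ≠ 0 := Complex.ofReal_ne_zero.mpr hs.ne'
        push_cast
        field_simp
        norm_cast
        rw [sq]; exact hss.symm
      have hv2 : star Ψ ⬝ᵥ v = 0 := by rw [hv, dotProduct_smul, hw, smul_zero]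
      have hle' : (star v ⬝ᵥ Ω *ᵥ v).re ≤ l := hl.2 ⟨v, hv1, hv2, rfl⟩
      have hexp : star v ⬝ᵥ Ω *ᵥ v = ((s⁻¹ * s⁻¹ : ℝ) : ℂ) * (star w ⬝ᵥ Ω *ᵥ w) := by
        rw [hv, star_smul, smul_dotProduct, mulVec_smul, dotProduct_smul, hstar,
          smul_eq_mul, smul_eq_mul]
        push_cast
        ring
      rw [hexp, Complex.re_ofReal_mul] at hle'
      have hinv : s⁻¹ * s⁻¹ = N⁻¹ := by rw [← mul_inv, hss]
      rw [hinv] at hle'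
      calc (star w ⬝ᵥ Ω *ᵥ w).re
          = N * (N⁻¹ * (star w ⬝ᵥ Ω *ᵥ w).re) := by
            rw [← mul_assoc, mul_inv_cancel₀ hNpos.ne', one_mul]
        _ ≤ N * l := mul_le_mul_of_nonneg_left hle' hNpos.le
        _ = l * N := mul_comm _ _
  -- fixed point fact
  have hΩvΨ : ∀ u, star Ψ ⬝ᵥ (Ω *ᵥ u) = star Ψ ⬝ᵥ u := by
    intro u
    rw [dotProduct_mulVec]
    congr 1
    have h1 : star Ψ ᵥ* Ω = star (Ωᴴ *ᵥ Ψ) := by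
      rw [star_mulVec, conjTranspose_conjTranspose]
    rw [h1, hherm.eq, hfix]
  -- the shifted matrix
  set P : Matrix (Fin k → Fin m) (Fin k → Fin m) ℂ := vecMulVec Ψ (star Ψ) with hP
  set M : Matrix (Fin k → Fin m) (Fin k → Fin m) ℂ :=
    (l : ℂ) • 1 + ((1 - l : ℝ) : ℂ) • P - Ω with hM
  have hMpsd : M.PosSemidef := by
    have hPherm : P.IsHermitian := by
      rw [hP]
      ext i j
      simp [conjTranspose_apply, vecMulVec_apply, mul_comm]
    refine posSemidef_iff_dotProduct_mulVec.mpr ⟨?_, ?_⟩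
    · show Mᴴ = M
      rw [hM, conjTranspose_sub, conjTranspose_add, conjTranspose_smul, conjTranspose_smul,
        conjTranspose_one, hPherm.eq, hherm.eq]
      simp [Complex.star_def, Complex.conj_ofReal]
    · intro v
      set c := star Ψ ⬝ᵥ v with hc
      set w := v - c • Ψ with hw
      have hworth : star Ψ ⬝ᵥ w = 0 := by
        rw [hw, dotProduct_sub, dotProduct_smul, hΨ1, smul_eq_mul, mul_one, sub_self]
      have hwΨ : star w ⬝ᵥ Ψ = 0 := by
        have h2 : star w ⬝ᵥ Ψ = star (star Ψ ⬝ᵥ w) := by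
          simp [dotProduct, Pi.star_apply, star_sum, mul_comm]
        rw [h2, hworth, star_zero]
      have hvd : v = c • Ψ + w := by rw [hw]; abel
      have hΩq : star v ⬝ᵥ Ω *ᵥ v = star c * c + star w ⬝ᵥ Ω *ᵥ w := by
        conv_lhs => rw [hvd]
        rw [mulVec_add, mulVec_smul, hfix, star_add, star_smul]
        simp only [add_dotProduct, dotProduct_add, smul_dotProduct, dotProduct_smul,
          hΨ1, hΩvΨ, hworth, hwΨ, smul_eq_mul, mul_zero, mul_one, add_zero, zero_add]
        ring
      have hIq : star v ⬝ᵥ v = star c * c + star w ⬝ᵥ w := by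
        conv_lhs => rw [hvd]
        rw [star_add, star_smul]
        simp only [add_dotProduct, dotProduct_add, smul_dotProduct, dotProduct_smul,
          hΨ1, hworth, hwΨ, smul_eq_mul, mul_zero, mul_one, add_zero, zero_add]
        ring
      have hPv : P *ᵥ v = c • Ψ := by
        rw [hP]
        funext i
        simp only [mulVec, dotProduct, vecMulVec_apply, Pi.smul_apply, smul_eq_mul]
        rw [hc]
        simp only [dotProduct]
        rw [Finset.sum_mul]
        exact Finset.sum_congr rfl fun j _ => by ring
      have hPq : star v ⬝ᵥ P *ᵥ v = star c * c := by
        rw [hPv, dotProduct_smul, smul_eq_mul]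
        have h3 : star v ⬝ᵥ Ψ = star c := by
          rw [hc]
          simp [dotProduct, Pi.star_apply, star_sum, mul_comm]
        rw [h3]
        exact mul_comm _ _
      have hform : star v ⬝ᵥ M *ᵥ v = (l:ℂ) * (star w ⬝ᵥ w) - star w ⬝ᵥ Ω *ᵥ w := by
        rw [hM, sub_mulVec, add_mulVec, smul_mulVec, smul_mulVec, one_mulVec,
          dotProduct_sub, dotProduct_add, dotProduct_smul, dotProduct_smul,
          hΩq, hIq, hPq]
        push_cast
        simp only [smul_eq_mul]
        ring
      have hww : 0 ≤ star w ⬝ᵥ w := by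
        simp only [dotProduct, Pi.star_apply]
        exact Finset.sum_nonneg fun i _ => star_mul_self_nonneg (w i)
      have hwΩw : 0 ≤ star w ⬝ᵥ Ω *ᵥ w := hpos.dotProduct_mulVec_nonneg w
      rw [hform, aux_real_of_nonneg hww, aux_real_of_nonneg hwΩw,
        ← Complex.ofReal_mul, ← Complex.ofReal_sub, Complex.zero_le_real]
      have := hub w hworth
      linarith
  have htrM : 0 ≤ (M * ξ).trace := by
    rw [hξB]; exact aux_trace_mul_nonneg hMpsd
  have htrP : (P * ξ).trace = star Ψ ⬝ᵥ ξ *ᵥ Ψ := by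
    simp only [hP, Matrix.trace, Matrix.diag, mul_apply, vecMulVec_apply, dotProduct,
      mulVec, Pi.star_apply, Finset.mul_sum]
    rw [Finset.sum_comm]
    exact Finset.sum_congr rfl fun g _ => Finset.sum_congr rfl fun f _ => by ring
  have hcomb : (Ω * ξ).trace =
      (l : ℂ) + ((1 - l : ℝ) : ℂ) * (star Ψ ⬝ᵥ ξ *ᵥ Ψ) - (M * ξ).trace := by
    have hMul : M * ξ = (l : ℂ) • ξ + ((1 - l : ℝ) : ℂ) • (P * ξ) - Ω * ξ := by
      rw [hM, sub_mul, add_mul, smul_mul_assoc, smul_mul_assoc, one_mul]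
    rw [hMul, trace_sub, trace_add, trace_smul, trace_smul, htr, htrP]
    simp only [smul_eq_mul, mul_one]
    ring
  have hret : 0 ≤ ((M * ξ).trace).re := by
    have := (Complex.le_def.mp htrM).1; simpa using this
  have hre2 : ((Ω * ξ).trace).re =
      l + (1 - l) * (star Ψ ⬝ᵥ ξ *ᵥ Ψ).re - ((M * ξ).trace).re := by
    rw [hcomb]
    simp [Complex.sub_re, Complex.add_re, Complex.ofReal_re, Complex.re_ofReal_mul]
  rw [hre2]
  have h1l : (0:ℝ) ≤ 1 - l := by linarith
  have := mul_le_mul_of_nonneg_left hp1 h1l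
  nlinarith [this, hret]
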